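/- arXiv:2408.09398 — 3 statements merged into one kernel-verified Lean document; each statement's English description precedes it below -/
import Mathlib

section
/- There exists a constant λ₁ ∈ (0,1) such that for every m ∈ ℕ⁺ and every x ∈ (0,1), the m-th derivative of the weighting function satisfies |w^{(m)}(x)| ≤ (m!/λ₁^m) · max{ x^{−m} exp(−1/(2x)), (1−x)^{−m} exp(−1/(2(1−x))) }. -/
open Finset

/-- Laskar's exponential weighting function. -/
noncomputable def w (x : ℝ) : ℝ :=
  if 0 < x ∧ x < 1 then
    (∫ s in (0:ℝ)..1, Real.exp (-(s * (1 - s))⁻¹))⁻¹ * Real.exp (-(x * (1 - x))⁻¹)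
  else 0

noncomputable def wc : ℝ := ∫ s in (0:ℝ)..1, Real.exp (-(s * (1 - s))⁻¹)

noncomputable def wF (z : ℂ) : ℂ := (wc⁻¹ : ℝ) * Complex.exp (-(z * (1 - z))⁻¹)

lemma wc_integrable : IntervalIntegrable (fun s : ℝ => Real.exp (-(s * (1 - s))⁻¹))
    MeasureTheory.volume 0 1 := by
  rw [intervalIntegrable_iff]
  haveI : MeasureTheory.IsFiniteMeasure (MeasureTheory.volume.restrict (Set.uIoc (0:ℝ) 1)) := by
    constructor
    rw [MeasureTheory.Measure.restrict_apply_univ, Set.uIoc_of_le (by norm_num : (0:ℝ) ≤ 1)]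
    simp
  apply MeasureTheory.Integrable.mono' (MeasureTheory.integrable_const (1:ℝ))
  · apply Measurable.aestronglyMeasurable
    apply Real.measurable_exp.comp
    apply Measurable.neg
    apply Measurable.inv
    exact measurable_id.mul (measurable_const.sub measurable_id)
  · filter_upwards [MeasureTheory.ae_restrict_mem measurableSet_uIoc] with s hs
    rw [Real.norm_eq_abs, abs_of_pos (Real.exp_pos _), Real.exp_le_one_iff, neg_nonpos]
    rw [Set.uIoc_of_le (by norm_num : (0:ℝ) ≤ 1)] at hs
    have : (0:ℝ) ≤ s * (1 - s) := mul_nonneg hs.1.le (by linarith [hs.2])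
    positivity

lemma wc_pos : 0 < wc :=
  intervalIntegral.intervalIntegral_pos_of_pos_on wc_integrable
    (fun s _ => Real.exp_pos _) one_pos

lemma wc_le_one : wc ≤ 1 := by
  have h := intervalIntegral.integral_mono_on (by norm_num : (0:ℝ) ≤ 1) wc_integrable
    intervalIntegrable_const (g := fun _ => (1:ℝ)) (fun s hs => by
      rw [Real.exp_le_one_iff, neg_nonpos]
      have : (0:ℝ) ≤ s * (1 - s) := mul_nonneg hs.1 (by linarith [hs.2])
      positivity)
  simpa [wc] using h

lemma inv_re_bound {a : ℝ} (ha : 0 < a) {u : ℂ} (hu : ‖u - a‖ ≤ a / 10) :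
    (2 * a)⁻¹ ≤ u⁻¹.re := by
  have h1 : |u.re - a| ≤ a / 10 := by
    have := Complex.abs_re_le_norm (u - a)
    simpa using this.trans hu
  have hre : 9 / 10 * a ≤ u.re := by
    have := abs_le.mp h1
    linarith [this.1]
  have habs : ‖u‖ ≤ 11 / 10 * a := by
    calc ‖u‖ = ‖(u - a) + a‖ := by ring_nf
    _ ≤ ‖u - a‖ + ‖(a : ℂ)‖ := norm_add_le _ _
    _ ≤ a / 10 + a := by
        have : ‖(a : ℂ)‖ = a := by simp [Complex.norm_real, Real.norm_eq_abs, abs_of_pos ha]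
        linarith [this.le]
    _ = 11 / 10 * a := by ring
  have hns : Complex.normSq u ≤ (11 / 10 * a) ^ 2 := by
    rw [← Complex.sq_norm]
    exact pow_le_pow_left₀ (norm_nonneg u) habs 2
  have hns_pos : 0 < Complex.normSq u := by
    apply Complex.normSq_pos.mpr
    intro h
    rw [h] at hre
    simp at hre
    nlinarith
  rw [Complex.inv_re, inv_eq_one_div, div_le_div_iff₀ (by positivity) hns_pos]
  nlinarith

lemma wF_norm_bound {x : ℝ} (hx : x ∈ Set.Ioo (0:ℝ) 1) {z : ℂ}
    (hz : ‖z - x‖ ≤ min x (1 - x) / 10) :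
    ‖wF z‖ ≤ wc⁻¹ * Real.exp (-(2 * min x (1 - x))⁻¹) := by
  obtain ⟨hx1, hx2⟩ := hx
  set t := min x (1 - x) with htdef
  have ht : 0 < t := lt_min hx1 (by linarith)
  have htx : t ≤ x := min_le_left _ _
  have ht1x : t ≤ 1 - x := min_le_right _ _
  have hz0x : ‖z - x‖ ≤ x / 10 := hz.trans (by linarith)
  have hz1x : ‖(1 - z) - ((1 - x : ℝ) : ℂ)‖ ≤ (1 - x) / 10 := by
    have : (1 - z) - ((1 - x : ℝ) : ℂ) = -(z - x) := by push_cast; ring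
    rw [this, norm_neg]
    exact hz.trans (by rw [htdef] at *; linarith)
  have h1 := inv_re_bound hx1 hz0x
  have h2 := inv_re_bound (by linarith : (0:ℝ) < 1 - x) hz1x
  have hz0 : z ≠ 0 := by
    intro h; rw [h] at h1; simp at h1
    have : (0:ℝ) < x⁻¹ * 2⁻¹ := by positivity
    linarith
  have hz1 : (1 : ℂ) - z ≠ 0 := by
    intro h; rw [h] at h2; simp at h2
    have : (0:ℝ) < (1 - x)⁻¹ * 2⁻¹ := mul_pos (inv_pos.mpr (by linarith)) (by norm_num)
    linarith
  have hsplit : (z * (1 - z))⁻¹ = z⁻¹ + (1 - z)⁻¹ := by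
    field_simp
    ring
  have habs : ‖wF z‖ = wc⁻¹ * Real.exp ((-(z * (1 - z))⁻¹).re) := by
    unfold wF
    rw [norm_mul, Complex.norm_exp, Complex.norm_real, Real.norm_eq_abs,
      abs_of_pos (inv_pos.mpr wc_pos)]
  rw [habs]
  have hkey : (2 * t)⁻¹ ≤ ((z * (1 - z))⁻¹).re := by
    rw [hsplit, Complex.add_re]
    have hp1 : (0:ℝ) ≤ (2 * x)⁻¹ := by positivity
    have hp2 : (0:ℝ) ≤ (2 * (1 - x))⁻¹ := (inv_pos.mpr (by linarith)).le
    rcases min_cases x (1 - x) with ⟨he, _⟩ | ⟨he, _⟩ <;> rw [htdef, he] <;> linarith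
  have : Real.exp ((-(z * (1 - z))⁻¹).re) ≤ Real.exp (-(2 * t)⁻¹) := by
    apply Real.exp_le_exp.mpr
    rw [Complex.neg_re]
    linarith
  exact mul_le_mul_of_nonneg_left this (inv_pos.mpr wc_pos).le

lemma wF_cauchy (m : ℕ) {x : ℝ} (hx : x ∈ Set.Ioo (0:ℝ) 1) :
    ‖iteratedDeriv m wF x‖ ≤
      (m.factorial : ℝ) * ((wc⁻¹ * Real.exp (-(2 * min x (1 - x))⁻¹)) *
        (min x (1 - x) / 10)⁻¹ ^ m) := by
  obtain ⟨hx1, hx2⟩ := hx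
  set t := min x (1 - x) with htdef
  have ht : 0 < t := lt_min hx1 (by linarith)
  have htx : t ≤ x := min_le_left _ _
  have ht1x : t ≤ 1 - x := min_le_right _ _
  set R : NNReal := ⟨t / 10, by positivity⟩ with hRdef
  have hRcoe : (R : ℝ) = t / 10 := rfl
  have hRpos : 0 < R := by
    rw [← NNReal.coe_pos, hRcoe]; positivity
  have hball : ∀ z : ℂ, z ∈ Metric.closedBall (x : ℂ) R → ‖z - x‖ ≤ t / 10 := by
    intro z hz
    rw [Metric.mem_closedBall, Complex.dist_eq] at hz
    exact hz.trans_eq hRcoe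
  have hdiff : DifferentiableOn ℂ wF (Metric.closedBall (x : ℂ) R) := by
    intro z hz
    have hzb := hball z hz
    have hz0 : z ≠ 0 := by
      intro h
      rw [h] at hzb
      simp only [zero_sub, norm_neg, Complex.norm_real, Real.norm_eq_abs,
        abs_of_pos hx1] at hzb
      linarith
    have hz1 : z ≠ 1 := by
      intro h
      rw [h] at hzb
      have : ((1:ℂ) - x) = ((1 - x : ℝ) : ℂ) := by push_cast; ring
      rw [this, Complex.norm_real, Real.norm_eq_abs, abs_of_pos (by linarith)] at hzb
      linarith
    have h1 : DifferentiableAt ℂ (fun z : ℂ => z * (1 - z)) z := by fun_prop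
    have h2 : DifferentiableAt ℂ (fun z : ℂ => (z * (1 - z))⁻¹) z :=
      h1.inv (mul_ne_zero hz0 (sub_ne_zero.mpr (Ne.symm hz1)))
    exact ((h2.neg.cexp).const_mul _).differentiableWithinAt
  have hps := hdiff.hasFPowerSeriesOnBall hRpos
  have hfact := hps.factorial_smul (1 : ℂ) m
  have heq : iteratedDeriv m wF ↑x
      = (m.factorial : ℂ) * cauchyPowerSeries wF ↑x ↑R m (fun _ => 1) := by
    rw [iteratedDeriv_eq_iteratedFDeriv, ← hfact, nsmul_eq_mul]
  rw [heq, norm_mul, Complex.norm_natCast]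
  have hop : ‖cauchyPowerSeries wF ↑x ↑R m (fun _ => 1)‖
      ≤ ‖cauchyPowerSeries wF ↑x ↑R m‖ := by
    have h := (cauchyPowerSeries wF ↑x ↑R m).le_opNorm (fun _ => (1 : ℂ))
    simpa using h
  have hcirc : ∀ θ : ℝ, circleMap ↑x ↑R θ ∈ Metric.closedBall (x : ℂ) R := by
    intro θ
    rw [Metric.mem_closedBall, Complex.dist_eq, circleMap_sub_center, norm_circleMap_zero,
      abs_of_nonneg (by rw [hRcoe]; positivity)]
  have hne : ∀ z ∈ Metric.closedBall (x : ℂ) R, z * (1 - z) ≠ 0 := by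
    intro z hz
    have hzb := hball z hz
    have hz0 : z ≠ 0 := by
      intro h
      rw [h] at hzb
      simp only [zero_sub, norm_neg, Complex.norm_real, Real.norm_eq_abs, abs_of_pos hx1] at hzb
      linarith
    have hz1 : z ≠ 1 := by
      intro h
      rw [h] at hzb
      have : ((1:ℂ) - x) = ((1 - x : ℝ) : ℂ) := by push_cast; ring
      rw [this, Complex.norm_real, Real.norm_eq_abs, abs_of_pos (by linarith)] at hzb
      linarith
    exact mul_ne_zero hz0 (sub_ne_zero.mpr (Ne.symm hz1))
  have hcont : Continuous fun θ : ℝ => wF (circleMap ↑x ↑R θ) := by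
    have hcm : Continuous fun θ : ℝ => circleMap (↑x) (↑R) θ := continuous_circleMap _ _
    unfold wF
    refine Continuous.mul continuous_const ?_
    apply Continuous.cexp
    apply Continuous.neg
    exact (hcm.mul (continuous_const.sub hcm)).inv₀ fun θ => hne _ (hcirc θ)
  set M : ℝ := wc⁻¹ * Real.exp (-(2 * t)⁻¹) with hMdef
  have hMpos : 0 < M := mul_pos (inv_pos.mpr wc_pos) (Real.exp_pos _)
  have hint : (∫ θ in (0:ℝ)..2 * Real.pi, ‖wF (circleMap ↑x ↑R θ)‖)
      ≤ 2 * Real.pi * M := by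
    have h := intervalIntegral.integral_mono_on (le_of_lt Real.two_pi_pos)
      (hcont.norm.intervalIntegrable (μ := MeasureTheory.volume) _ _) intervalIntegrable_const
      (g := fun _ => M) (fun θ _ => wF_norm_bound ⟨hx1, hx2⟩ (hball _ (hcirc θ)))
    rw [intervalIntegral.integral_const, smul_eq_mul, sub_zero] at h
    exact h
  have habsR : |(R : ℝ)| = t / 10 := by rw [hRcoe]; exact abs_of_pos (by positivity)
  have h3 : ‖cauchyPowerSeries wF ↑x ↑R m‖ ≤ M * (t / 10)⁻¹ ^ m := by
    refine (norm_cauchyPowerSeries_le wF ↑x ↑R m).trans ?_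
    rw [habsR]
    apply mul_le_mul_of_nonneg_right _ (by positivity)
    calc (2 * Real.pi)⁻¹ * ∫ θ : ℝ in (0)..2 * Real.pi, ‖wF (circleMap ↑x ↑R θ)‖
        ≤ (2 * Real.pi)⁻¹ * (2 * Real.pi * M) :=
          mul_le_mul_of_nonneg_left hint (by positivity)
      _ = M := by field_simp
  calc (m.factorial : ℝ) * ‖cauchyPowerSeries wF ↑x ↑R m fun _ => 1‖
      ≤ (m.factorial : ℝ) * ‖cauchyPowerSeries wF ↑x ↑R m‖ :=
        mul_le_mul_of_nonneg_left hop (Nat.cast_nonneg _)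
    _ ≤ (m.factorial : ℝ) * (M * (t / 10)⁻¹ ^ m) :=
        mul_le_mul_of_nonneg_left h3 (Nat.cast_nonneg _)

lemma wF_differentiableAt {z : ℂ} (hz0 : z ≠ 0) (hz1 : z ≠ 1) :
    DifferentiableAt ℂ wF z := by
  have h1 : DifferentiableAt ℂ (fun z : ℂ => z * (1 - z)) z := by fun_prop
  have h2 : DifferentiableAt ℂ (fun z : ℂ => (z * (1 - z))⁻¹) z :=
    h1.inv (mul_ne_zero hz0 (sub_ne_zero.mpr (Ne.symm hz1)))
  exact (h2.neg.cexp).const_mul _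

lemma w_eq_re (m : ℕ) : ∀ x ∈ Set.Ioo (0:ℝ) 1,
    iteratedDeriv m w x = (iteratedDeriv m wF x).re := by
  induction m with
  | zero =>
    intro x hx
    simp only [iteratedDeriv_zero]
    have hw : w x = wc⁻¹ * Real.exp (-(x * (1 - x))⁻¹) := by
      rw [w, if_pos ⟨hx.1, hx.2⟩]; rfl
    have hF : wF (x : ℂ) = ((wc⁻¹ * Real.exp (-(x * (1 - x))⁻¹) : ℝ) : ℂ) := by
      unfold wF; push_cast; ring
    rw [hw, hF, Complex.ofReal_re]
  | succ m ih =>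
    intro x hx
    have hU : IsOpen ({(0:ℂ), 1}ᶜ : Set ℂ) :=
      (Set.Finite.insert _ (Set.finite_singleton _)).isClosed.isOpen_compl
    have hFd : DifferentiableOn ℂ wF ({(0:ℂ), 1}ᶜ : Set ℂ) := by
      intro z hz
      simp only [Set.mem_compl_iff, Set.mem_insert_iff, Set.mem_singleton_iff] at hz
      push_neg at hz
      exact (wF_differentiableAt hz.1 hz.2).differentiableWithinAt
    have hAn : AnalyticOnNhd ℂ wF ({(0:ℂ), 1}ᶜ : Set ℂ) := hFd.analyticOnNhd hU
    have hGa : AnalyticOnNhd ℂ (iteratedDeriv m wF) ({(0:ℂ), 1}ᶜ : Set ℂ) := by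
      rw [iteratedDeriv_eq_iterate]
      exact hAn.iterated_deriv m
    rw [iteratedDeriv_succ]
    have hmem : Set.Ioo (0:ℝ) 1 ∈ nhds x := isOpen_Ioo.mem_nhds hx
    have heq : (iteratedDeriv m w) =ᶠ[nhds x] fun y : ℝ => (iteratedDeriv m wF ↑y).re :=
      Filter.eventuallyEq_of_mem hmem (fun y hy => ih y hy)
    rw [heq.deriv_eq]
    have hxU : (x : ℂ) ∈ ({(0:ℂ), 1}ᶜ : Set ℂ) := by
      simp only [Set.mem_compl_iff, Set.mem_insert_iff, Set.mem_singleton_iff]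
      push_neg
      constructor
      · exact_mod_cast hx.1.ne'
      · exact_mod_cast hx.2.ne
    have hd : HasDerivAt (iteratedDeriv m wF) (deriv (iteratedDeriv m wF) ↑x) ↑x :=
      (hGa ↑x hxU).differentiableAt.hasDerivAt
    rw [hd.real_of_complex.deriv, ← iteratedDeriv_succ]

theorem stmt8 :
    ∃ lam1 : ℝ, lam1 ∈ Set.Ioo (0 : ℝ) 1 ∧
      ∀ m : ℕ, 1 ≤ m → ∀ x ∈ Set.Ioo (0 : ℝ) 1,
        |iteratedDeriv m w x| ≤ ((m.factorial : ℝ) / lam1 ^ m) *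
          max (x ^ (-(m : ℝ)) * Real.exp (-(2 * x)⁻¹))
              ((1 - x) ^ (-(m : ℝ)) * Real.exp (-(2 * (1 - x))⁻¹)) := by
  have hwc := wc_pos
  have hwc1 := wc_le_one
  refine ⟨wc / 10, ⟨by positivity, by nlinarith⟩, ?_⟩
  intro m hm x hx
  obtain ⟨hx1, hx2⟩ := hx
  set t := min x (1 - x) with htdef
  have ht : 0 < t := lt_min hx1 (by linarith)
  have h1 := w_eq_re m x ⟨hx1, hx2⟩
  have h2 := wF_cauchy m ⟨hx1, hx2⟩
  have h3 : |iteratedDeriv m w x| ≤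
      (m.factorial : ℝ) * (wc⁻¹ * Real.exp (-(2 * t)⁻¹) * (t / 10)⁻¹ ^ m) := by
    rw [h1]
    exact (Complex.abs_re_le_norm _).trans h2
  refine h3.trans ?_
  have hE : (0:ℝ) < Real.exp (-(2 * t)⁻¹) := Real.exp_pos _
  have hwcm : wc⁻¹ ≤ (wc ^ m)⁻¹ := by
    apply inv_anti₀ (pow_pos hwc m)
    calc wc ^ m ≤ wc ^ 1 := pow_le_pow_of_le_one hwc.le hwc1 hm
      _ = wc := pow_one wc
  have h10 : ((t / 10)⁻¹ : ℝ) ^ m = 10 ^ m * (t ^ m)⁻¹ := by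
    rw [inv_div, div_pow, div_eq_mul_inv]
  have hfrac : ((m.factorial : ℝ)) / (wc / 10) ^ m
      = (m.factorial : ℝ) * 10 ^ m * (wc ^ m)⁻¹ := by
    rw [div_pow, div_div_eq_mul_div, div_eq_mul_inv]
  have hC : (0:ℝ) ≤ (m.factorial : ℝ) * 10 ^ m * (t ^ m)⁻¹ * Real.exp (-(2 * t)⁻¹) := by
    positivity
  have key : (m.factorial : ℝ) * (wc⁻¹ * Real.exp (-(2 * t)⁻¹) * (t / 10)⁻¹ ^ m)
      ≤ ((m.factorial : ℝ) / (wc / 10) ^ m) * (t ^ (-(m : ℝ)) * Real.exp (-(2 * t)⁻¹)) := by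
    rw [Real.rpow_neg ht.le, Real.rpow_natCast, h10, hfrac]
    calc (m.factorial : ℝ) * (wc⁻¹ * Real.exp (-(2 * t)⁻¹) * (10 ^ m * (t ^ m)⁻¹))
        = ((m.factorial : ℝ) * 10 ^ m * (t ^ m)⁻¹ * Real.exp (-(2 * t)⁻¹)) * wc⁻¹ := by ring
      _ ≤ ((m.factorial : ℝ) * 10 ^ m * (t ^ m)⁻¹ * Real.exp (-(2 * t)⁻¹)) * (wc ^ m)⁻¹ :=
          mul_le_mul_of_nonneg_left hwcm hC
      _ = (m.factorial : ℝ) * 10 ^ m * (wc ^ m)⁻¹ * ((t ^ m)⁻¹ * Real.exp (-(2 * t)⁻¹)) := by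
          ring
  refine key.trans ?_
  apply mul_le_mul_of_nonneg_left _ (div_nonneg (Nat.cast_nonneg _)
    (pow_nonneg (by positivity) m))
  rcases min_cases x (1 - x) with ⟨he, _⟩ | ⟨he, _⟩ <;> rw [htdef, he]
  · exact le_max_left _ _
  · exact le_max_right _ _
end

section
/- For all A, B > 0 one has the Cauchy–Schlömilch identity ∫₀^{∞} exp(−(A s − B s⁻¹)²) ds = √π / (2A); consequently, for all σ > 0 and η > 0, ∫₀^{∞} exp(−σ s² − η s⁻²) ds = (√π / (2√σ)) · exp(−2√(ση)). -/
open MeasureTheory Real Set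

-- image of f
lemma image_f {A B : ℝ} (hA : 0 < A) (hB : 0 < B) :
    (fun s : ℝ => A * s - B * s⁻¹) '' Ioi 0 = univ := by
  ext y
  simp only [mem_image, mem_univ, iff_true]
  set D := Real.sqrt (y ^ 2 + 4 * A * B) with hDdef
  have hD : D ^ 2 = y ^ 2 + 4 * A * B := Real.sq_sqrt (by positivity)
  have hD0 : 0 ≤ D := Real.sqrt_nonneg _
  have hs : 0 < (y + D) / (2 * A) := by
    apply div_pos _ (by linarith)
    nlinarith [mul_pos hA hB]
  refine ⟨(y + D) / (2 * A), hs, ?_⟩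
  have hyD : 0 < y + D := by nlinarith [mul_pos hA hB]
  field_simp [hyD.ne']
  nlinarith [hD]

lemma image_h {A B : ℝ} (hA : 0 < A) (hB : 0 < B) :
    (fun s : ℝ => B / A * s⁻¹) '' Ioi 0 = Ioi 0 := by
  ext y
  simp only [mem_image, mem_Ioi]
  constructor
  · rintro ⟨s, hs, rfl⟩
    positivity
  · intro hy
    refine ⟨B / A * y⁻¹, by positivity, ?_⟩
    field_simp

lemma inj_f {A B : ℝ} (hA : 0 < A) (hB : 0 < B) :
    InjOn (fun s : ℝ => A * s - B * s⁻¹) (Ioi 0) := by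
  apply StrictMonoOn.injOn
  intro a ha b hb hab
  simp only [mem_Ioi] at ha hb
  have h1 : b⁻¹ < a⁻¹ := by
    rw [inv_lt_inv₀ hb ha]; exact hab
  have h2 : A * a < A * b := by nlinarith
  nlinarith

lemma inj_h {A B : ℝ} (hA : 0 < A) (hB : 0 < B) :
    InjOn (fun s : ℝ => B / A * s⁻¹) (Ioi 0) := by
  intro a ha b hb hab
  simp only [mem_Ioi] at ha hb
  simp only at hab
  have hBA : B / A ≠ 0 := by positivity
  exact inv_injective (mul_left_cancel₀ hBA hab)

lemma deriv_f {A B : ℝ} (s : ℝ) (hs : s ≠ 0) :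
    HasDerivAt (fun s : ℝ => A * s - B * s⁻¹) (A + B * (s ^ 2)⁻¹) s := by
  have h1 : HasDerivAt (fun s : ℝ => A * s) (A * 1) s := (hasDerivAt_id s).const_mul A
  have h2 : HasDerivAt (fun s : ℝ => B * s⁻¹) (B * (-(s ^ 2)⁻¹)) s :=
    (hasDerivAt_inv hs).const_mul B
  have h3 := h1.sub h2
  simp only [mul_one, mul_neg, sub_neg_eq_add] at h3
  exact h3

lemma deriv_h {A B : ℝ} (s : ℝ) (hs : s ≠ 0) :
    HasDerivAt (fun s : ℝ => B / A * s⁻¹) (B / A * (-(s ^ 2)⁻¹)) s :=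
  (hasDerivAt_inv hs).const_mul (B / A)

lemma integrable_e {A B : ℝ} (hA : 0 < A) (hB : 0 < B) :
    IntegrableOn (fun s : ℝ => Real.exp (-(A * s - B * s⁻¹) ^ 2)) (Ioi 0) := by
  set c := Real.sqrt (2 * B / A) with hc
  have hc0 : 0 < c := Real.sqrt_pos.mpr (by positivity)
  have hc2 : c ^ 2 = 2 * B / A := Real.sq_sqrt (by positivity)
  have hmeas : AEStronglyMeasurable (fun s : ℝ => Real.exp (-(A * s - B * s⁻¹) ^ 2))
      (volume.restrict (Ioi (0:ℝ))) := by
    apply Measurable.aestronglyMeasurable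
    exact Real.measurable_exp.comp
      ((((measurable_id.const_mul A).sub (measurable_inv.const_mul B)).pow_const 2).neg)
  have h1 : IntegrableOn (fun s : ℝ => Real.exp (-(A * s - B * s⁻¹) ^ 2)) (Ioc 0 c) := by
    apply Integrable.mono' ((integrableOn_const_iff (C := (1:ℝ))).mpr (Or.inr measure_Ioc_lt_top))
      (hmeas.mono_measure (Measure.restrict_mono Ioc_subset_Ioi_self le_rfl))
    filter_upwards with s
    rw [Real.norm_eq_abs, abs_of_nonneg (Real.exp_nonneg _)]
    exact Real.exp_le_one_iff.mpr (neg_nonpos.mpr (sq_nonneg _))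
  have h2 : IntegrableOn (fun s : ℝ => Real.exp (-(A * s - B * s⁻¹) ^ 2)) (Ioi c) := by
    apply Integrable.mono' ((integrable_exp_neg_mul_sq (by positivity : (0:ℝ) < A^2/4)).integrableOn)
      (hmeas.mono_measure (Measure.restrict_mono (Ioi_subset_Ioi hc0.le) le_rfl))
    rw [ae_restrict_iff' measurableSet_Ioi]
    filter_upwards with s hs
    simp only [mem_Ioi] at hs
    have hs0 : 0 < s := hc0.trans hs
    rw [Real.norm_eq_abs, abs_of_nonneg (Real.exp_nonneg _), Real.exp_le_exp]
    have key : A * s / 2 ≤ A * s - B * s⁻¹ := by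
      have hss : c ^ 2 < s ^ 2 := by nlinarith
      have h2B : 2 * B / A < s ^ 2 := hc2 ▸ hss
      rw [div_lt_iff₀ hA] at h2B
      have : B * s⁻¹ ≤ A * s / 2 := by
        rw [mul_inv_le_iff₀ hs0]
        nlinarith
      linarith
    have h0 : (0:ℝ) ≤ A * s / 2 := by positivity
    nlinarith [mul_self_le_mul_self h0 key]
  have := h1.union h2
  rwa [Ioc_union_Ioi_eq_Ioi hc0.le] at this

lemma part1 (A B : ℝ) (hA : 0 < A) (hB : 0 < B) :
    (∫ s in Set.Ioi (0:ℝ), Real.exp (-(A * s - B * s⁻¹) ^ 2))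
      = Real.sqrt Real.pi / (2 * A) := by
  set e : ℝ → ℝ := fun s => Real.exp (-(A * s - B * s⁻¹) ^ 2) with he
  -- h substitution
  have hderivh : ∀ s ∈ Ioi (0:ℝ), HasDerivWithinAt (fun s : ℝ => B / A * s⁻¹)
      (B / A * (-(s ^ 2)⁻¹)) (Ioi 0) s :=
    fun s hs => (deriv_h s (ne_of_gt hs)).hasDerivWithinAt
  have hcomp : ∀ s ∈ Ioi (0:ℝ), e (B / A * s⁻¹) = e s := by
    intro s hs
    simp only [mem_Ioi] at hs
    have : A * (B / A * s⁻¹) - B * (B / A * s⁻¹)⁻¹ = -(A * s - B * s⁻¹) := by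
      field_simp
      ring
    simp only [he, this, neg_sq]
  have hsub : ∫ s in Ioi (0:ℝ), e s = ∫ s in Ioi 0, (B / A * (s ^ 2)⁻¹) * e s := by
    conv_lhs => rw [← image_h hA hB]
    rw [integral_image_eq_integral_abs_deriv_smul measurableSet_Ioi hderivh (inj_h hA hB) e]
    apply setIntegral_congr_fun measurableSet_Ioi
    intro s hs
    have hs0 : (0:ℝ) < s := hs
    show |B / A * -(s ^ 2)⁻¹| • e (B / A * s⁻¹) = B / A * (s ^ 2)⁻¹ * e s
    rw [hcomp s hs, smul_eq_mul, abs_of_nonpos (by simp; positivity : B / A * (-(s^2)⁻¹) ≤ 0)]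
    ring_nf
  -- integrability of the weighted function
  have hint2 : IntegrableOn (fun s : ℝ => B * (s ^ 2)⁻¹ * e s) (Ioi 0) := by
    have base := (integrableOn_image_iff_integrableOn_abs_deriv_smul measurableSet_Ioi hderivh
      (inj_h hA hB) e).mp (by rw [image_h hA hB]; exact integrable_e hA hB)
    have base2 : IntegrableOn (fun s : ℝ => B / A * (s ^ 2)⁻¹ * e s) (Ioi 0) := by
      apply base.congr_fun ?_ measurableSet_Ioi
      intro s hs
      have hs0 : (0:ℝ) < s := hs
      show |B / A * -(s ^ 2)⁻¹| • e (B / A * s⁻¹) = B / A * (s ^ 2)⁻¹ * e s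
      rw [hcomp s hs, smul_eq_mul, abs_of_nonpos (by simp; positivity : B / A * (-(s^2)⁻¹) ≤ 0)]
      ring_nf
    refine IntegrableOn.congr_fun (base2.const_mul A) (fun s hs => ?_) measurableSet_Ioi
    have hs0 : (0:ℝ) < s := hs
    show A * (B / A * (s ^ 2)⁻¹ * e s) = B * (s ^ 2)⁻¹ * e s
    field_simp
  -- f substitution
  have hderivf : ∀ s ∈ Ioi (0:ℝ), HasDerivWithinAt (fun s : ℝ => A * s - B * s⁻¹)
      (A + B * (s ^ 2)⁻¹) (Ioi 0) s :=
    fun s hs => (deriv_f s (ne_of_gt hs)).hasDerivWithinAt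
  have hmain : Real.sqrt Real.pi = ∫ s in Ioi (0:ℝ), (A + B * (s ^ 2)⁻¹) * e s := by
    have g1 : ∫ t : ℝ, Real.exp (-t ^ 2) = Real.sqrt Real.pi := by
      simpa using integral_gaussian 1
    rw [← g1, ← setIntegral_univ, ← image_f hA hB,
      integral_image_eq_integral_abs_deriv_smul measurableSet_Ioi hderivf (inj_f hA hB)]
    apply setIntegral_congr_fun measurableSet_Ioi
    intro s hs
    have hs0 : (0:ℝ) < s := hs
    show |A + B * (s ^ 2)⁻¹| • Real.exp (-(A * s - B * s⁻¹) ^ 2) = (A + B * (s ^ 2)⁻¹) * e s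
    rw [smul_eq_mul, abs_of_pos (by positivity : (0:ℝ) < A + B * (s^2)⁻¹)]
  -- combine
  have hsplit : ∫ s in Ioi (0:ℝ), (A + B * (s ^ 2)⁻¹) * e s
      = (∫ s in Ioi (0:ℝ), A * e s) + ∫ s in Ioi (0:ℝ), B * (s ^ 2)⁻¹ * e s := by
    rw [← integral_add ((integrable_e hA hB).const_mul A) hint2]
    apply setIntegral_congr_fun measurableSet_Ioi
    intro s _; ring
  have e2 : ∫ s in Ioi (0:ℝ), B * (s ^ 2)⁻¹ * e s = A * ∫ s in Ioi (0:ℝ), e s := by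
    rw [hsub, ← integral_const_mul]
    apply setIntegral_congr_fun measurableSet_Ioi
    intro s hs
    have hs0 : (0:ℝ) < s := hs
    field_simp
  have e1 : ∫ s in Ioi (0:ℝ), A * e s = A * ∫ s in Ioi (0:ℝ), e s := integral_const_mul A e
  have : Real.sqrt Real.pi = 2 * A * ∫ s in Ioi (0:ℝ), e s := by
    rw [hmain, hsplit, e1, e2]; ring
  rw [eq_div_iff (by positivity : 2 * A ≠ 0)]
  linarith [this]

theorem stmt10 :
    (∀ A B : ℝ, 0 < A → 0 < B →
      (∫ s in Set.Ioi (0:ℝ), Real.exp (-(A * s - B * s⁻¹) ^ 2))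
        = Real.sqrt Real.pi / (2 * A)) ∧
    (∀ σ η : ℝ, 0 < σ → 0 < η →
      (∫ s in Set.Ioi (0:ℝ), Real.exp (-σ * s ^ 2 - η * s⁻¹ ^ 2))
        = Real.sqrt Real.pi / (2 * Real.sqrt σ) * Real.exp (-2 * Real.sqrt (σ * η))) := by
  refine ⟨part1, ?_⟩
  intro σ η hσ hη
  have hA : 0 < Real.sqrt σ := Real.sqrt_pos.mpr hσ
  have hB : 0 < Real.sqrt η := Real.sqrt_pos.mpr hη
  have hσ2 : Real.sqrt σ ^ 2 = σ := Real.sq_sqrt hσ.le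
  have hη2 : Real.sqrt η ^ 2 = η := Real.sq_sqrt hη.le
  have hmul : Real.sqrt σ * Real.sqrt η = Real.sqrt (σ * η) := (Real.sqrt_mul hσ.le η).symm
  have hkey : ∀ s ∈ Set.Ioi (0:ℝ), Real.exp (-σ * s ^ 2 - η * s⁻¹ ^ 2)
      = Real.exp (-2 * Real.sqrt (σ * η))
        * Real.exp (-(Real.sqrt σ * s - Real.sqrt η * s⁻¹) ^ 2) := by
    intro s hs
    have hs0 : (0:ℝ) < s := hs
    rw [← Real.exp_add]
    congr 1
    have hi : s * s⁻¹ = 1 := mul_inv_cancel₀ hs0.ne'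
    linear_combination s^2 * hσ2 + s⁻¹^2 * hη2
      - 2 * s * s⁻¹ * hmul - 2 * Real.sqrt (σ * η) * hi
  rw [setIntegral_congr_fun measurableSet_Ioi hkey, integral_const_mul,
    part1 _ _ hA hB]
  ring
end

section
/- For all p, q > 0 there exists a constant λ̃ = λ̃(p,q) > 1 such that for every m ∈ ℕ⁺, ∫₀¹ |w_{p,q}^{(m)}(x)| dx ≤ λ̃^m · m^{(1 + 1/min{p,q})·m}. -/
open Finset

/-- The generalized exponential weighting function with regularity parameters `p, q`. -/
noncomputable def wpq (p q : ℝ) (x : ℝ) : ℝ :=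
  if 0 < x ∧ x < 1 then
    (∫ s in (0:ℝ)..1, Real.exp (-(s ^ (-p) * (1 - s) ^ (-q))))⁻¹ *
      Real.exp (-(x ^ (-p) * (1 - x) ^ (-q)))
  else 0

namespace S12

open MeasureTheory

noncomputable def wconst (p q : ℝ) : ℝ :=
  (∫ s in (0:ℝ)..1, Real.exp (-(s ^ (-p) * (1 - s) ^ (-q))))⁻¹

/-- term: (c, k, u, v) ↦ c * x^(-(p k + u)) * (1-x)^(-(q k + v)) -/
noncomputable def Term (p q : ℝ) (t : ℝ × ℕ × ℕ × ℕ) (x : ℝ) : ℝ :=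
  t.1 * x ^ (-(p * t.2.1 + t.2.2.1) : ℝ) * (1 - x) ^ (-(q * t.2.1 + t.2.2.2) : ℝ)

noncomputable def step (p q : ℝ) (t : ℝ × ℕ × ℕ × ℕ) : List (ℝ × ℕ × ℕ × ℕ) :=
  [(-(t.1 * (p * t.2.1 + t.2.2.1)), t.2.1, t.2.2.1 + 1, t.2.2.2),
   (t.1 * (q * t.2.1 + t.2.2.2), t.2.1, t.2.2.1, t.2.2.2 + 1),
   (t.1 * p, t.2.1 + 1, t.2.2.1 + 1, t.2.2.2),
   (-(t.1 * q), t.2.1 + 1, t.2.2.1, t.2.2.2 + 1)]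

noncomputable def gee (p q x : ℝ) : ℝ := x ^ (-p) * (1 - x) ^ (-q)

lemma hasDerivAt_gee (p q x : ℝ) (hx : 0 < x) (hx1 : x < 1) :
    HasDerivAt (gee p q)
      ((-p) * x ^ (-p - 1) * (1 - x) ^ (-q) - x ^ (-p) * ((-q) * (1 - x) ^ (-q - 1)) ) x := by
  have h1x : (0:ℝ) < 1 - x := by linarith
  have h1 : HasDerivAt (fun y : ℝ => y ^ (-p)) ((-p) * x ^ (-p - 1)) x :=
    Real.hasDerivAt_rpow_const (Or.inl hx.ne')
  have h2 : HasDerivAt (fun y : ℝ => (1 - y) ^ (-q)) (((-q) * (1 - x) ^ (-q - 1)) * (-1)) x := by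
    have houter : HasDerivAt (fun z : ℝ => z ^ (-q)) ((-q) * (1 - x) ^ (-q - 1)) (1 - x) :=
      Real.hasDerivAt_rpow_const (Or.inl h1x.ne')
    have hinner : HasDerivAt (fun y : ℝ => 1 - y) (-1) x := (hasDerivAt_id x).const_sub 1
    exact houter.comp x hinner
  have : HasDerivAt (gee p q) _ x := h1.mul h2
  convert this using 1
  ring

lemma hasDerivAt_term (p q : ℝ) (t : ℝ × ℕ × ℕ × ℕ) (x : ℝ) (hx : 0 < x) (hx1 : x < 1) :
    HasDerivAt (fun y => Term p q t y * Real.exp (-(gee p q y)))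
      ((((step p q t).map (fun s => Term p q s x)).sum) * Real.exp (-(gee p q x))) x := by
  obtain ⟨c, k, u, v⟩ := t
  have h1x : (0:ℝ) < 1 - x := by linarith
  set A : ℝ := -(p * k + u) with hA
  set B : ℝ := -(q * k + v) with hB
  have h1 : HasDerivAt (fun y : ℝ => y ^ A) (A * x ^ (A - 1)) x :=
    Real.hasDerivAt_rpow_const (Or.inl hx.ne')
  have h2 : HasDerivAt (fun y : ℝ => (1 - y) ^ B) ((B * (1 - x) ^ (B - 1)) * (-1)) x := by
    have houter : HasDerivAt (fun z : ℝ => z ^ B) (B * (1 - x) ^ (B - 1)) (1 - x) :=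
      Real.hasDerivAt_rpow_const (Or.inl h1x.ne')
    exact houter.comp x ((hasDerivAt_id x).const_sub 1)
  have hg := hasDerivAt_gee p q x hx hx1
  have hexp : HasDerivAt (fun y => Real.exp (-(gee p q y)))
      (Real.exp (-(gee p q x)) * (-((-p) * x ^ (-p - 1) * (1 - x) ^ (-q) -
        x ^ (-p) * ((-q) * (1 - x) ^ (-q - 1))))) x :=
    (Real.hasDerivAt_exp _).comp x hg.neg
  have hT : HasDerivAt (fun y => Term p q (c,k,u,v) y)
      ((c * (A * x ^ (A - 1))) * (1 - x) ^ B +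
        (c * x ^ A) * ((B * (1 - x) ^ (B - 1)) * (-1))) x := by
    exact ((h1.const_mul c).mul h2)
  have : HasDerivAt (fun y => Term p q (c,k,u,v) y * Real.exp (-(gee p q y))) _ x := hT.mul hexp
  convert this using 1
  -- now an algebraic identity between rpow expressions
  simp only [step, Term, List.map, List.sum_cons, List.sum_nil, add_zero]
  have hrw : ∀ a b : ℝ, x ^ a * x ^ b = x ^ (a + b) := fun a b => (Real.rpow_add hx a b).symm
  have hrw2 : ∀ a b : ℝ, (1-x) ^ a * (1-x) ^ b = (1-x) ^ (a + b) :=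
    fun a b => (Real.rpow_add h1x a b).symm
  push_cast
  rw [show (-(p * ↑k + (↑u + 1)) : ℝ) = A - 1 by rw [hA]; ring,
      show (-(q * ↑k + (↑v + 1)) : ℝ) = B - 1 by rw [hB]; ring,
      show (-(p * (↑k + 1) + (↑u + 1)) : ℝ) = A + (-p - 1) by rw [hA]; ring,
      show (-(q * (↑k + 1) + ↑v) : ℝ) = B + (-q) by rw [hB]; ring,
      show (-(p * (↑k + 1) + ↑u) : ℝ) = A + (-p) by rw [hA]; ring,
      show (-(q * (↑k + 1) + (↑v + 1)) : ℝ) = B + (-q - 1) by rw [hB]; ring,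
      ← hrw, ← hrw2, ← hrw, ← hrw2]
  ring


lemma sum_map_flatMap {α β : Type*} (l : List α) (f : α → List β) (g : β → ℝ) :
    ((l.flatMap f).map g).sum = (l.map (fun a => ((f a).map g).sum)).sum := by
  induction l with
  | nil => simp
  | cons a l ih => simp [List.flatMap_cons, List.map_append, List.sum_append, ih]

lemma hasDerivAt_list (p q : ℝ) (l : List (ℝ × ℕ × ℕ × ℕ)) (x : ℝ) (hx : 0 < x) (hx1 : x < 1) :
    HasDerivAt (fun y => ((l.map (fun t => Term p q t y)).sum) * Real.exp (-(gee p q y)))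
      ((((l.flatMap (step p q)).map (fun s => Term p q s x)).sum) * Real.exp (-(gee p q x))) x := by
  induction l with
  | nil => simpa using hasDerivAt_const x (0:ℝ)
  | cons t l ih =>
    have h := (hasDerivAt_term p q t x hx hx1).add ih
    rw [sum_map_flatMap] at ih ⊢
    simp only [List.map_cons, List.sum_cons, add_mul]
    rw [sum_map_flatMap] at h
    exact h


def Good (p q : ℝ) (m : ℕ) (l : List (ℝ × ℕ × ℕ × ℕ)) : Prop :=
  (∀ t ∈ l, t.2.1 ≤ m ∧ t.2.2.1 ≤ m ∧ t.2.2.2 ≤ m ∧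
    |t.1| ≤ (p + q + 2) ^ m * (m : ℝ) ^ (m - t.2.1)) ∧
  l.length ≤ 4 ^ m ∧
  ∀ x ∈ Set.Ioo (0:ℝ) 1, iteratedDeriv m (wpq p q) x =
    (wconst p q) * (((l.map (fun t => Term p q t x)).sum) * Real.exp (-(gee p q x)))

lemma coeff_bound_mul (p q : ℝ) (hp : 0 < p) (hq : 0 < q) (m k : ℕ) (hk : k ≤ m)
    (c e : ℝ) (he : 0 ≤ e) (hem : e ≤ (p + q + 2) * (m + 1))
    (hc : |c| ≤ (p + q + 2) ^ m * (m : ℝ) ^ (m - k)) :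
    |c * e| ≤ (p + q + 2) ^ (m + 1) * ((m : ℝ) + 1) ^ (m + 1 - k) := by
  have hC : (0:ℝ) < p + q + 2 := by linarith
  have h1 : |c * e| = |c| * e := by rw [abs_mul, abs_of_nonneg he]
  rw [h1]
  have hmono : ((m:ℝ)) ^ (m - k) ≤ ((m:ℝ) + 1) ^ (m - k) :=
    pow_le_pow_left₀ (by positivity) (by linarith) _
  have hsub : m + 1 - k = (m - k) + 1 := by omega
  calc |c| * e ≤ ((p + q + 2) ^ m * (m : ℝ) ^ (m - k)) * ((p + q + 2) * (m + 1)) := by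
        apply mul_le_mul hc hem he
        positivity
    _ ≤ ((p + q + 2) ^ m * ((m:ℝ) + 1) ^ (m - k)) * ((p + q + 2) * ((m:ℝ) + 1)) := by
        apply mul_le_mul_of_nonneg_right _ (by positivity)
        exact mul_le_mul_of_nonneg_left hmono (by positivity)
    _ = (p + q + 2) ^ (m + 1) * ((m : ℝ) + 1) ^ (m + 1 - k) := by
        rw [hsub]; ring

lemma coeff_bound_shift (p q : ℝ) (hp : 0 < p) (hq : 0 < q) (m k : ℕ) (hk : k ≤ m)
    (c e : ℝ) (he : 0 ≤ e) (hem : e ≤ p + q + 2)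
    (hc : |c| ≤ (p + q + 2) ^ m * (m : ℝ) ^ (m - k)) :
    |c * e| ≤ (p + q + 2) ^ (m + 1) * ((m : ℝ) + 1) ^ (m - k) := by
  have hC : (0:ℝ) < p + q + 2 := by linarith
  rw [abs_mul, abs_of_nonneg he]
  have hmono : ((m:ℝ)) ^ (m - k) ≤ ((m:ℝ) + 1) ^ (m - k) :=
    pow_le_pow_left₀ (by positivity) (by linarith) _
  calc |c| * e ≤ ((p + q + 2) ^ m * (m : ℝ) ^ (m - k)) * (p + q + 2) := by
        apply mul_le_mul hc hem he; positivity
    _ ≤ ((p + q + 2) ^ m * ((m:ℝ)+1) ^ (m - k)) * (p + q + 2) := by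
        apply mul_le_mul_of_nonneg_right _ (by positivity)
        exact mul_le_mul_of_nonneg_left hmono (by positivity)
    _ = (p + q + 2) ^ (m + 1) * ((m : ℝ) + 1) ^ (m - k) := by ring

lemma good_exists (p q : ℝ) (hp : 0 < p) (hq : 0 < q) (m : ℕ) :
    ∃ l, Good p q m l := by
  induction m with
  | zero =>
    refine ⟨[(1,0,0,0)], ?_, by simp, ?_⟩
    · rintro t ht
      simp only [List.mem_singleton] at ht
      subst ht
      refine ⟨le_refl _, le_refl _, le_refl _, by norm_num⟩
    · intro x hx
      rw [iteratedDeriv_zero]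
      have : wpq p q x = (wconst p q) * Real.exp (-(gee p q x)) := by
        rw [wpq, if_pos ⟨hx.1, hx.2⟩]; rfl
      rw [this]
      simp [Term, gee]
  | succ m ih =>
    obtain ⟨l, hbound, hlen, hval⟩ := ih
    refine ⟨l.flatMap (step p q), ?_, ?_, ?_⟩
    · intro t' ht'
      rw [List.mem_flatMap] at ht'
      obtain ⟨t, ht, hmem⟩ := ht'
      obtain ⟨c, k, u, v⟩ := t
      obtain ⟨hk, hu, hv, hc⟩ := hbound _ ht
      dsimp only at hk hu hv hc
      simp only [step, List.mem_cons, List.mem_singleton, List.not_mem_nil, or_false] at hmem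
      have hkR : (k:ℝ) <= m := Nat.cast_le.mpr hk
      have huR : (u:ℝ) <= m := Nat.cast_le.mpr hu
      have hvR : (v:ℝ) <= m := Nat.cast_le.mpr hv
      rcases hmem with h | h | h | h <;> subst h <;> dsimp only <;>
        refine ⟨by omega, by omega, by omega, ?_⟩ <;> push_cast
      · rw [show (-(c * (p * (k:ℝ) + u))) = c * (p * k + u) * (-1) by ring, abs_mul, abs_neg,
          abs_one, mul_one, show m + 1 - k = (m - k) + 1 from by omega]
        calc |c * (p * (k:ℝ) + u)| ≤ (p+q+2) ^ (m+1) * ((m:ℝ)+1) ^ (m+1-k) :=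
              coeff_bound_mul p q hp hq m k hk c _ (by positivity) (by nlinarith) hc
          _ = (p+q+2) ^ (m+1) * ((m:ℝ)+1) ^ (m - k + 1) := by
              rw [show m + 1 - k = (m - k) + 1 from by omega]
      · calc |c * (q * (k:ℝ) + v)| ≤ (p+q+2) ^ (m+1) * ((m:ℝ)+1) ^ (m+1-k) :=
              coeff_bound_mul p q hp hq m k hk c _ (by positivity) (by nlinarith) hc
          _ = (p+q+2) ^ (m+1) * ((m:ℝ)+1) ^ (m - k + 1) := by
              rw [show m + 1 - k = (m - k) + 1 from by omega]
          _ ≤ (p+q+2) ^ (m+1) * ((m:ℝ)+1) ^ (m + 1 - k) := by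
              rw [show m + 1 - k = (m - k) + 1 from by omega]
      · exact coeff_bound_shift p q hp hq m k hk c p hp.le (by linarith) hc
      · rw [show (-(c * q)) = c * q * (-1) by ring, abs_mul, abs_neg, abs_one, mul_one]
        exact coeff_bound_shift p q hp hq m k hk c q hq.le (by linarith) hc
    · rw [List.length_flatMap]
      calc (l.map (List.length ∘ step p q)).sum ≤ (l.map (List.length ∘ step p q)).length • 4 := by
            apply List.sum_le_card_nsmul
            intro a ha
            rw [List.mem_map] at ha
            obtain ⟨t, _, rfl⟩ := ha
            simp [step]
        _ = 4 * l.length := by simp [mul_comm]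
        _ ≤ 4 ^ (m + 1) := by
            rw [pow_succ, mul_comm]
            exact Nat.mul_le_mul_right 4 hlen
    · intro x hx
      rw [iteratedDeriv_succ]
      have hev : iteratedDeriv m (wpq p q) =ᶠ[nhds x]
          fun y => (wconst p q) * (((l.map (fun t => Term p q t y)).sum) *
            Real.exp (-(gee p q y))) := by
        filter_upwards [Ioo_mem_nhds hx.1 hx.2] with y hy
        exact hval y hy
      rw [hev.deriv_eq]
      exact (HasDerivAt.const_mul (wconst p q)
        (hasDerivAt_list p q l x hx.1 hx.2)).deriv


lemma rpow_mul_exp_neg_le (t a : ℝ) (ht : 0 < t) (ha : 0 ≤ a) :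
    t ^ a * Real.exp (-t) ≤ a ^ a := by
  rcases eq_or_lt_of_le ha with h | ha'
  · rw [← h, Real.rpow_zero, Real.rpow_zero, one_mul]
    exact Real.exp_le_one_iff.mpr (by linarith)
  · have hlog : Real.log (t / a) ≤ t / a - 1 := Real.log_le_sub_one_of_pos (by positivity)
    rw [Real.log_div ht.ne' ha'.ne'] at hlog
    have key : a * Real.log t - t ≤ a * Real.log a := by
      have := mul_le_mul_of_nonneg_left hlog ha
      have haa : a * (t / a) = t := by field_simp
      nlinarith
    calc t ^ a * Real.exp (-t) = Real.exp (a * Real.log t - t) := by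
          rw [Real.rpow_def_of_pos ht, ← Real.exp_add, mul_comm (Real.log t) a]; ring_nf
      _ ≤ Real.exp (a * Real.log a) := Real.exp_le_exp.mpr (by linarith)
      _ = a ^ a := by rw [Real.rpow_def_of_pos ha', mul_comm]

lemma one_sided_bound (r s : ℝ) (hr : 0 < r) (hrs : r ≤ s) (y : ℝ) (hy : 0 < y)
    (m k u : ℕ) (hm : 1 ≤ m) (hk : k ≤ m) (hu : u ≤ m) :
    y ^ (-(s * k + u) : ℝ) * Real.exp (-(y ^ (-s))) ≤
      ((1 + 1/r) ^ (1 + 1/r) : ℝ) ^ m * (m : ℝ) ^ ((k : ℝ) + m / r) := by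
  have hs : 0 < s := lt_of_lt_of_le hr hrs
  have ht : 0 < y ^ (-s) := Real.rpow_pos_of_pos hy _
  set a : ℝ := k + u / s with hA
  have ha : 0 ≤ a := by positivity
  have h1 : y ^ (-(s * k + u) : ℝ) = (y ^ (-s)) ^ a := by
    rw [← Real.rpow_mul hy.le]
    congr 1
    rw [hA]
    field_simp
  have hmR : (1:ℝ) ≤ m := by exact_mod_cast hm
  have haM : a ≤ (1 + 1/r) * m := by
    have h3 : (u:ℝ) / s ≤ (m:ℝ) / r := by
      apply div_le_div₀ (by positivity) (by exact_mod_cast hu) hr hrs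
    have h4 : (k:ℝ) ≤ m := by exact_mod_cast hk
    rw [hA, add_mul, one_mul]
    have hmr : (m:ℝ)/r = 1/r * m := by ring
    linarith
  have hM0 : (0:ℝ) ≤ (1 + 1/r) * m := by positivity
  have step1 : y ^ (-(s * k + u) : ℝ) * Real.exp (-(y ^ (-s))) ≤ a ^ a := by
    rw [h1]; exact rpow_mul_exp_neg_le _ a ht ha
  have step2 : a ^ a ≤ ((1 + 1/r) * m) ^ a := Real.rpow_le_rpow ha haM ha
  have hb1 : (1:ℝ) ≤ 1 + 1/r := by
    have : 0 < 1/r := by positivity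
    linarith
  have step3 : ((1 + 1/r) * m) ^ a = (1 + 1/r) ^ a * (m:ℝ) ^ a :=
    Real.mul_rpow (by linarith) (by positivity)
  have step4 : (1 + 1/r) ^ a ≤ (1 + 1/r) ^ ((1 + 1/r) * m) :=
    Real.rpow_le_rpow_of_exponent_le hb1 haM
  have step5 : (1 + 1/r) ^ ((1 + 1/r) * (m:ℝ)) = (((1 + 1/r) ^ (1 + 1/r) : ℝ)) ^ m := by
    rw [Real.rpow_mul (by linarith), Real.rpow_natCast]
  have step6 : (m:ℝ) ^ a ≤ (m:ℝ) ^ ((k:ℝ) + m / r) := by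
    apply Real.rpow_le_rpow_of_exponent_le hmR
    rw [hA]
    have : (u:ℝ) / s ≤ (m:ℝ) / r :=
      div_le_div₀ (by positivity) (by exact_mod_cast hu) hr hrs
    linarith
  calc y ^ (-(s * k + u) : ℝ) * Real.exp (-(y ^ (-s))) ≤ a ^ a := step1
    _ ≤ (1 + 1/r) ^ a * (m:ℝ) ^ a := by rw [← step3]; exact step2
    _ ≤ ((1 + 1/r) ^ (1 + 1/r) : ℝ) ^ m * (m : ℝ) ^ ((k : ℝ) + m / r) := by
        apply mul_le_mul _ step6 (by positivity) (by positivity)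
        rw [← step5]; exact step4


lemma small_factor (c : ℝ) (hc : 0 < c) (m : ℕ) (e : ℝ) (he : 0 ≤ e) (hem : e ≤ c * m)
    (z : ℝ) (hz : 1/2 ≤ z) : z ^ (-e : ℝ) ≤ ((2:ℝ) ^ c) ^ m := by
  have hz0 : 0 < z := by linarith
  have h1 : z ^ (-e : ℝ) = (z ^ e)⁻¹ := Real.rpow_neg hz0.le e
  have h2 : ((1/2 : ℝ)) ^ e ≤ z ^ e := Real.rpow_le_rpow (by norm_num) hz he
  have h3 : (z ^ e)⁻¹ ≤ (((1/2 : ℝ)) ^ e)⁻¹ := by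
    apply inv_anti₀ (Real.rpow_pos_of_pos (by norm_num) e) h2
  have h4 : (((1/2 : ℝ)) ^ e)⁻¹ = (2:ℝ) ^ e := by
    rw [show (1/2 : ℝ) = 2⁻¹ by norm_num, Real.inv_rpow (by norm_num), inv_inv]
  have h5 : (2:ℝ) ^ e ≤ (2:ℝ) ^ (c * m) :=
    Real.rpow_le_rpow_of_exponent_le (by norm_num) hem
  have h6 : (2:ℝ) ^ (c * (m:ℝ)) = ((2:ℝ) ^ c) ^ m := by
    rw [Real.rpow_mul (by norm_num), Real.rpow_natCast]
  rw [h1, ← h6]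
  exact le_trans h3 (h4 ▸ h5)

lemma sup_bound (p q : ℝ) (hp : 0 < p) (hq : 0 < q) (m k u v : ℕ) (hm : 1 ≤ m)
    (hk : k ≤ m) (hu : u ≤ m) (hv : v ≤ m) (x : ℝ) (hx : x ∈ Set.Ioo (0:ℝ) 1) :
    x ^ (-(p * k + u) : ℝ) * (1 - x) ^ (-(q * k + v) : ℝ) * Real.exp (-(gee p q x)) ≤
      ((2:ℝ) ^ (p + q + 1) * (1 + 1/min p q) ^ (1 + 1/min p q)) ^ m *
        (m : ℝ) ^ ((k : ℝ) + m / min p q) := by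
  set r := min p q with hrdef
  have hr : 0 < r := lt_min hp hq
  have hx0 := hx.1
  have hx1 := hx.2
  have h1x : (0:ℝ) < 1 - x := by linarith
  have hkR : (k:ℝ) ≤ m := by exact_mod_cast hk
  have huR : (u:ℝ) ≤ m := by exact_mod_cast hu
  have hvR : (v:ℝ) ≤ m := by exact_mod_cast hv
  have hmR : (1:ℝ) ≤ m := by exact_mod_cast hm
  rw [mul_pow]
  set B : ℝ := ((1 + 1/r) ^ (1 + 1/r) : ℝ) with hB
  set S : ℝ := ((2:ℝ) ^ (p + q + 1)) ^ m with hS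
  have hSnn : 0 ≤ S := by positivity
  have hMnn : (0:ℝ) ≤ (m : ℝ) ^ ((k : ℝ) + m / r) := by positivity
  rcases le_or_gt x (1/2) with hhalf | hhalf
  · -- x small : use decay in x
    have bound1 : (1 - x) ^ (-(q * k + v) : ℝ) ≤ S := by
      apply small_factor (p+q+1) (by linarith) m _ (by positivity)
        (by nlinarith) _ (by linarith)
    have hgeed : x ^ (-p : ℝ) ≤ gee p q x := by
      rw [gee]
      nth_rewrite 1 [← mul_one (x ^ (-p:ℝ))]
      apply mul_le_mul_of_nonneg_left _ (by positivity)
      exact Real.one_le_rpow_of_pos_of_le_one_of_nonpos h1x (by linarith) (by linarith)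
    have bound2 : Real.exp (-(gee p q x)) ≤ Real.exp (-(x ^ (-p:ℝ))) :=
      Real.exp_le_exp.mpr (by linarith)
    have bound3 : x ^ (-(p * k + u) : ℝ) * Real.exp (-(x ^ (-p))) ≤
        B ^ m * (m : ℝ) ^ ((k : ℝ) + m / r) :=
      one_sided_bound r p hr (min_le_left p q) x hx0 m k u hm hk hu
    calc x ^ (-(p * k + u) : ℝ) * (1 - x) ^ (-(q * k + v) : ℝ) * Real.exp (-(gee p q x))
        ≤ x ^ (-(p * k + u) : ℝ) * (1 - x) ^ (-(q * k + v) : ℝ) * Real.exp (-(x ^ (-p:ℝ))) := by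
          apply mul_le_mul_of_nonneg_left bound2 (by positivity)
      _ = (1 - x) ^ (-(q * k + v) : ℝ) * (x ^ (-(p * k + u) : ℝ) * Real.exp (-(x ^ (-p:ℝ)))) := by
          ring
      _ ≤ S * (B ^ m * (m : ℝ) ^ ((k : ℝ) + m / r)) := by
          apply mul_le_mul bound1 bound3 (by positivity) hSnn
      _ = S * B ^ m * (m : ℝ) ^ ((k : ℝ) + m / r) := by ring
  · -- x large : use decay in 1 - x
    have bound1 : x ^ (-(p * k + u) : ℝ) ≤ S := by
      apply small_factor (p+q+1) (by linarith) m _ (by positivity)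
        (by nlinarith) _ (by linarith)
    have hgeed : (1-x) ^ (-q : ℝ) ≤ gee p q x := by
      rw [gee]
      nth_rewrite 1 [← one_mul ((1-x) ^ (-q:ℝ))]
      apply mul_le_mul_of_nonneg_right _ (by positivity)
      exact Real.one_le_rpow_of_pos_of_le_one_of_nonpos hx0 (by linarith) (by linarith)
    have bound2 : Real.exp (-(gee p q x)) ≤ Real.exp (-((1-x) ^ (-q:ℝ))) :=
      Real.exp_le_exp.mpr (by linarith)
    have bound3 : (1-x) ^ (-(q * k + v) : ℝ) * Real.exp (-((1-x) ^ (-q))) ≤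
        B ^ m * (m : ℝ) ^ ((k : ℝ) + m / r) :=
      one_sided_bound r q hr (min_le_right p q) (1-x) h1x m k v hm hk hv
    calc x ^ (-(p * k + u) : ℝ) * (1 - x) ^ (-(q * k + v) : ℝ) * Real.exp (-(gee p q x))
        ≤ x ^ (-(p * k + u) : ℝ) * (1 - x) ^ (-(q * k + v) : ℝ) *
            Real.exp (-((1-x) ^ (-q:ℝ))) := by
          apply mul_le_mul_of_nonneg_left bound2 (by positivity)
      _ = x ^ (-(p * k + u) : ℝ) * ((1 - x) ^ (-(q * k + v) : ℝ) *
            Real.exp (-((1-x) ^ (-q:ℝ)))) := by ring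
      _ ≤ S * (B ^ m * (m : ℝ) ^ ((k : ℝ) + m / r)) := by
          apply mul_le_mul bound1 bound3 (by positivity) hSnn
      _ = S * B ^ m * (m : ℝ) ^ ((k : ℝ) + m / r) := by ring


lemma abs_list_sum {α : Type*} (l : List α) (f : α → ℝ) :
    |(l.map f).sum| ≤ (l.map (fun a => |f a|)).sum := by
  induction l with
  | nil => simp
  | cons a l ih =>
    simp only [List.map_cons, List.sum_cons]
    exact (abs_add_le _ _).trans (by linarith)

lemma sum_map_mul_right' {α : Type*} (l : List α) (f : α → ℝ) (r : ℝ) :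
    (l.map (fun a => f a * r)).sum = (l.map f).sum * r := by
  induction l with
  | nil => simp
  | cons a l ih => simp [ih]; ring

lemma merge_pows (r : ℝ) (hr : 0 < r) (m k : ℕ) (hm : 1 ≤ m) (hk : k ≤ m) :
    (m : ℝ) ^ (m - k) * (m : ℝ) ^ ((k : ℝ) + m / r) = (m : ℝ) ^ ((1 + 1/r) * m) := by
  have hm0 : (0:ℝ) < m := by exact_mod_cast hm
  rw [← Real.rpow_natCast (m:ℝ) (m - k), ← Real.rpow_add hm0]
  congr 1
  rw [Nat.cast_sub hk]
  field_simp
  ring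

/-- pointwise bound on the m-th derivative -/
lemma pointwise_bound (p q : ℝ) (hp : 0 < p) (hq : 0 < q) (m : ℕ) (hm : 1 ≤ m)
    (x : ℝ) (hx : x ∈ Set.Ioo (0:ℝ) 1) :
    |iteratedDeriv m (wpq p q) x| ≤ |wconst p q| *
      ((4 * ((p + q + 2) * ((2:ℝ) ^ (p + q + 1) * (1 + 1/min p q) ^ (1 + 1/min p q)))) ^ m *
        (m : ℝ) ^ ((1 + 1/min p q) * m)) := by
  set r := min p q with hrdef
  have hr : 0 < r := lt_min hp hq
  set B : ℝ := (2:ℝ) ^ (p + q + 1) * (1 + 1/r) ^ (1 + 1/r) with hB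
  have hBpos : 0 < B := by positivity
  set E : ℝ := (p + q + 2) * B with hE
  have hEpos : 0 < E := by positivity
  obtain ⟨l, hbound, hlen, hval⟩ := good_exists p q hp hq m
  rw [hval x hx]
  have hmpow : (0:ℝ) ≤ (m : ℝ) ^ ((1 + 1/r) * m) := by positivity
  have perterm : ∀ t ∈ l, |Term p q t x| * Real.exp (-(gee p q x)) ≤
      E ^ m * (m : ℝ) ^ ((1 + 1/r) * m) := by
    intro t ht
    obtain ⟨c, k, u, v⟩ := t
    obtain ⟨hk, hu, hv, hc⟩ := hbound _ ht
    dsimp only at hk hu hv hc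
    have habs : |Term p q (c,k,u,v) x| =
        |c| * (x ^ (-(p * k + u) : ℝ) * (1 - x) ^ (-(q * k + v) : ℝ)) := by
      rw [Term]
      dsimp only
      rw [abs_mul, abs_mul, abs_of_nonneg (Real.rpow_nonneg hx.1.le _),
        abs_of_nonneg (Real.rpow_nonneg (by have := hx.2; linarith) _), mul_assoc]
    rw [habs, mul_assoc]
    calc |c| * (x ^ (-(p * k + u) : ℝ) * (1 - x) ^ (-(q * k + v) : ℝ) *
            Real.exp (-(gee p q x)))
        ≤ ((p + q + 2) ^ m * (m : ℝ) ^ (m - k)) *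
            (B ^ m * (m : ℝ) ^ ((k : ℝ) + m / r)) := by
          have h1x : (0:ℝ) < 1 - x := by have := hx.2; linarith
          apply mul_le_mul hc _ (mul_nonneg (mul_nonneg (Real.rpow_nonneg hx.1.le _)
            (Real.rpow_nonneg h1x.le _)) (Real.exp_pos _).le) (by positivity)
          exact sup_bound p q hp hq m k u v hm hk hu hv x hx
      _ = ((p + q + 2) ^ m * B ^ m) * ((m : ℝ) ^ (m - k) * (m : ℝ) ^ ((k : ℝ) + m / r)) := by
          ring
      _ = E ^ m * (m : ℝ) ^ ((1 + 1/r) * m) := by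
          rw [merge_pows r hr m k hm hk]
          simp only [hE, hB, mul_pow]
  have habs2 : |wconst p q * ((l.map (fun t => Term p q t x)).sum * Real.exp (-(gee p q x)))|
      = |wconst p q| * (|(l.map (fun t => Term p q t x)).sum| * Real.exp (-(gee p q x))) := by
    rw [abs_mul, abs_mul, abs_of_pos (Real.exp_pos _)]
  rw [habs2]
  apply mul_le_mul_of_nonneg_left _ (abs_nonneg _)
  calc |(l.map (fun t => Term p q t x)).sum| * Real.exp (-(gee p q x))
      ≤ ((l.map (fun t => |Term p q t x|)).sum) * Real.exp (-(gee p q x)) := by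
        apply mul_le_mul_of_nonneg_right (abs_list_sum l _) (Real.exp_pos _).le
    _ = (l.map (fun t => |Term p q t x| * Real.exp (-(gee p q x)))).sum := by
        rw [sum_map_mul_right']
    _ ≤ (l.map (fun t => |Term p q t x| * Real.exp (-(gee p q x)))).length •
          (E ^ m * (m : ℝ) ^ ((1 + 1/r) * m)) := by
        apply List.sum_le_card_nsmul
        intro a ha
        rw [List.mem_map] at ha
        obtain ⟨t, ht, rfl⟩ := ha
        exact perterm t ht
    _ = l.length * (E ^ m * (m : ℝ) ^ ((1 + 1/r) * m)) := by
        rw [List.length_map, nsmul_eq_mul]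
    _ ≤ (4:ℝ) ^ m * (E ^ m * (m : ℝ) ^ ((1 + 1/r) * m)) := by
        apply mul_le_mul_of_nonneg_right _ (by positivity)
        calc (l.length : ℝ) ≤ ((4 ^ m : ℕ) : ℝ) := by exact_mod_cast hlen
          _ = (4:ℝ) ^ m := by push_cast; ring
    _ = (4 * E) ^ m * (m : ℝ) ^ ((1 + 1/r) * m) := by
        simp only [hE, hB, mul_pow]
        ring


lemma integrand_integrable (p q : ℝ) (hp : 0 < p) (hq : 0 < q) :
    IntervalIntegrable (fun s : ℝ => Real.exp (-(s ^ (-p) * (1 - s) ^ (-q)))) volume 0 1 := by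
  rw [intervalIntegrable_iff_integrableOn_Ioc_of_le zero_le_one]
  apply Integrable.mono' (g := fun _ => (1:ℝ))
  · exact (integrableOn_const_iff).mpr (Or.inr (by rw [Real.volume_Ioc]; exact ENNReal.ofReal_lt_top))
  · apply Measurable.aestronglyMeasurable
    fun_prop
  · filter_upwards [ae_restrict_mem measurableSet_Ioc] with s hs
    rw [Real.norm_eq_abs, abs_of_pos (Real.exp_pos _)]
    apply Real.exp_le_one_iff.mpr
    have h1 : (0:ℝ) ≤ s ^ (-p) := Real.rpow_nonneg hs.1.le _
    have h2 : (0:ℝ) ≤ (1 - s) ^ (-q) := Real.rpow_nonneg (by linarith [hs.2]) _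
    nlinarith

lemma wconst_pos (p q : ℝ) (hp : 0 < p) (hq : 0 < q) : 0 < wconst p q := by
  rw [wconst]
  apply inv_pos.mpr
  exact intervalIntegral.intervalIntegral_pos_of_pos_on (integrand_integrable p q hp hq)
    (fun x _ => Real.exp_pos _) zero_lt_one


end S12

open S12 MeasureTheory in
theorem stmt12 (p q : ℝ) (hp : 0 < p) (hq : 0 < q) :
    ∃ lamt > 1, ∀ m : ℕ, 1 ≤ m →
      (∫ x in (0:ℝ)..1, |iteratedDeriv m (wpq p q) x|)
        ≤ lamt ^ m * (m : ℝ) ^ ((1 + 1 / min p q) * m) := by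
  set r := min p q with hrdef
  have hr : 0 < r := lt_min hp hq
  set E4 : ℝ := 4 * ((p + q + 2) * ((2:ℝ) ^ (p + q + 1) * (1 + 1/r) ^ (1 + 1/r))) with hE4
  have hA : (1:ℝ) ≤ (2:ℝ) ^ (p + q + 1) :=
    Real.one_le_rpow (by norm_num) (by linarith)
  have hC : (1:ℝ) ≤ (1 + 1/r) ^ (1 + 1/r) := by
    apply Real.one_le_rpow
    · have : 0 < 1/r := by positivity
      linarith
    · have : 0 < 1/r := by positivity
      linarith
  have hAC : (1:ℝ) ≤ (2:ℝ) ^ (p + q + 1) * (1 + 1/r) ^ (1 + 1/r) := by nlinarith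
  have hE4one : (1:ℝ) ≤ E4 := by rw [hE4]; nlinarith
  set W : ℝ := max (wconst p q) 1 with hW
  have hW1 : (1:ℝ) ≤ W := le_max_right _ _
  have hwc : 0 < wconst p q := wconst_pos p q hp hq
  refine ⟨W * E4 + 1, by nlinarith, ?_⟩
  intro m hm
  have hmR : (1:ℝ) ≤ (m:ℝ) := by exact_mod_cast hm
  set T : ℝ := |wconst p q| * (E4 ^ m * (m : ℝ) ^ ((1 + 1/r) * m)) with hT
  have hTnn : 0 ≤ T := by positivity
  obtain ⟨n, rfl⟩ : ∃ n, m = n + 1 := ⟨m - 1, by omega⟩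
  have meas : Measurable (iteratedDeriv (n+1) (wpq p q)) := by
    rw [iteratedDeriv_succ]
    exact measurable_deriv _
  have h1ae : ∀ᵐ x : ℝ, x ≠ 1 := by
    rw [MeasureTheory.ae_iff]
    convert Real.volume_singleton (a := 1) using 2
    ext y
    simp
  have haebound : ∀ᵐ x ∂(volume.restrict (Set.Ioc (0:ℝ) 1)),
      |iteratedDeriv (n+1) (wpq p q) x| ≤ T := by
    filter_upwards [ae_restrict_mem measurableSet_Ioc,
      h1ae.filter_mono (MeasureTheory.ae_mono Measure.restrict_le_self)] with x hx hx1
    have hxIoo : x ∈ Set.Ioo (0:ℝ) 1 := ⟨hx.1, lt_of_le_of_ne hx.2 hx1⟩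
    exact pointwise_bound p q hp hq (n+1) hm x hxIoo
  have hInt : IntegrableOn (fun x => |iteratedDeriv (n+1) (wpq p q) x|)
      (Set.Ioc (0:ℝ) 1) volume := by
    apply Integrable.mono' (g := fun _ => T)
    · exact (integrableOn_const_iff).mpr
        (Or.inr (by rw [Real.volume_Ioc]; exact ENNReal.ofReal_lt_top))
    · exact meas.abs.aestronglyMeasurable
    · filter_upwards [haebound] with x hx
      rwa [Real.norm_eq_abs, abs_abs]
  have step1 : (∫ x in (0:ℝ)..1, |iteratedDeriv (n+1) (wpq p q) x|) ≤ T := by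
    rw [intervalIntegral.integral_of_le zero_le_one]
    calc (∫ x in Set.Ioc (0:ℝ) 1, |iteratedDeriv (n+1) (wpq p q) x|)
        ≤ ∫ _ in Set.Ioc (0:ℝ) 1, T := by
          apply integral_mono_ae hInt _ haebound
          exact (integrableOn_const_iff).mpr
            (Or.inr (by rw [Real.volume_Ioc]; exact ENNReal.ofReal_lt_top))
      _ = T := by
          rw [setIntegral_const, Real.volume_real_Ioc, smul_eq_mul]
          norm_num
  refine le_trans step1 ?_
  rw [hT, abs_of_pos hwc]
  have key : wconst p q * E4 ^ (n+1) ≤ (W * E4 + 1) ^ (n+1) := by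
    have h1 : wconst p q ≤ W ^ (n+1) :=
      le_trans (le_max_left _ 1) (le_self_pow₀ hW1 (by omega))
    calc wconst p q * E4 ^ (n+1) ≤ W ^ (n+1) * E4 ^ (n+1) :=
          mul_le_mul_of_nonneg_right h1 (by positivity)
      _ = (W * E4) ^ (n+1) := (mul_pow W E4 (n+1)).symm
      _ ≤ (W * E4 + 1) ^ (n+1) := pow_le_pow_left₀ (by positivity) (by linarith) _
  calc wconst p q * (E4 ^ (n+1) * (↑(n+1)) ^ ((1 + 1/r) * (↑(n+1)))) =
        (wconst p q * E4 ^ (n+1)) * (↑(n+1)) ^ ((1 + 1/r) * (↑(n+1))) := by ring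
    _ ≤ (W * E4 + 1) ^ (n+1) * (↑(n+1)) ^ ((1 + 1/r) * (↑(n+1))) := by
        apply mul_le_mul_of_nonneg_right key (by positivity)
end
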